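/- Let L be a compact Hausdorff space and let D be a simple unital C*-algebra. Let τ : C(L, D) → C(L, D) be a *-algebra automorphism which is C(L)-linear, i.e., τ(f·a) = f·τ(a) for every f ∈ C(L, ℂ) and a ∈ C(L, D), where (f·a)(x) = f(x) a(x). Then for every x ∈ L the map t_x : D → D defined by t_x(d) = τ(1 ⊗ d)(x), where 1 ⊗ d denotes the constant function on L with value d, is a *-automorphism of D; moreover τ(a)(x) = t_x(a(x)) for all a ∈ C(L, D) and x ∈ L, and for every d ∈ D the map x ↦ t_x(d) from L to D is norm-continuous. -/
import Mathlib


/-- Let `L` be a compact Hausdorff space and `D` a simple unital C*-algebra.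
Let `τ` be a `C(L)`-linear *-algebra automorphism of `C(L, D)`.  Then for every `x ∈ L` the map
`d ↦ τ(1 ⊗ d)(x)` is a *-automorphism `t_x` of `D`, one has `τ(a)(x) = t_x(a(x))` for all
`a ∈ C(L, D)` and `x ∈ L`, and for each `d ∈ D` the map `x ↦ t_x(d)` is norm-continuous. -/
theorem transitionMap_of_CL_linear_automorphism
    {L : Type*} [TopologicalSpace L] [CompactSpace L] [T2Space L]
    {D : Type*} [CStarAlgebra D]
    (hsimple : ∀ I : TwoSidedIdeal D, IsClosed (I : Set D) → I = ⊥ ∨ I = ⊤)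
    (τ : C(L, D) ≃⋆ₐ[ℂ] C(L, D))
    (hlin : ∀ (f : C(L, ℂ)) (a : C(L, D)), τ (f • a) = f • τ a) :
    (∀ x : L, ∃ t : D ≃⋆ₐ[ℂ] D,
      (∀ d : D, t d = τ (ContinuousMap.const L d) x) ∧
      (∀ a : C(L, D), τ a x = t (a x))) ∧
    (∀ d : D, Continuous fun x : L => τ (ContinuousMap.const L d) x) := by
  classical
  -- key vanishing lemma: a x = 0 → τ a x = 0, for any C(L)-linear star-equiv
  have key : ∀ (σ : C(L, D) ≃⋆ₐ[ℂ] C(L, D)),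
      (∀ (f : C(L, ℂ)) (a : C(L, D)), σ (f • a) = f • σ a) →
      ∀ (a : C(L, D)) (x : L), a x = 0 → σ a x = 0 := by
    intro σ hσ a x hax
    rw [← norm_le_zero_iff]
    refine le_of_forall_pos_le_add ?_
    intro ε hε
    have hU : IsOpen {y : L | ‖a y‖ < ε} :=
      isOpen_lt (by continuity) continuous_const
    have hxU : x ∈ {y : L | ‖a y‖ < ε} := by simpa [hax] using hε
    obtain ⟨f, hf0, hf1, hf01⟩ := exists_continuous_zero_one_of_isClosed
      (isClosed_singleton (x := x)) hU.isClosed_compl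
      (by simpa [Set.disjoint_singleton_left] using hxU)
    set g : C(L, ℂ) := ⟨fun y => (f y : ℂ), Complex.continuous_ofReal.comp f.continuous⟩
      with hg
    have hgy : ∀ y, g y = (f y : ℂ) := fun y => rfl
    have hdiff : σ a - g • σ a = σ (a - g • a) := by
      rw [map_sub, hσ]
    have hfx : f x = 0 := hf0 rfl
    have h1 : σ a x = (σ a - g • σ a) x := by
      simp [ContinuousMap.smul_apply', hgy, hfx]
    have hbound : ‖a - g • a‖ ≤ ε := by
      refine (ContinuousMap.norm_le _ hε.le).2 fun y => ?_
      by_cases hy : ‖a y‖ < ε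
      · have h2 : (a - g • a) y = (1 - (f y : ℂ)) • a y := by
          rw [ContinuousMap.sub_apply, ContinuousMap.smul_apply', hgy, sub_smul, one_smul]
        rw [h2, norm_smul]
        have h01 := hf01 y
        have hle : ‖(1 - (f y : ℂ))‖ ≤ 1 := by
          rw [show (1 : ℂ) - (f y : ℂ) = ((1 - f y : ℝ) : ℂ) by push_cast; ring,
            Complex.norm_real, Real.norm_eq_abs, abs_le]
          constructor
          · linarith [h01.2]
          · linarith [h01.1]
        calc ‖(1 - (f y : ℂ))‖ * ‖a y‖ ≤ 1 * ‖a y‖ :=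
              mul_le_mul_of_nonneg_right hle (norm_nonneg _)
          _ ≤ ε := by rw [one_mul]; exact hy.le
      · have hfy : f y = 1 := hf1 hy
        have h2 : (a - g • a) y = 0 := by
          rw [ContinuousMap.sub_apply, ContinuousMap.smul_apply', hgy, hfy]
          simp
        rw [h2, norm_zero]
        exact hε.le
    calc ‖σ a x‖ = ‖σ (a - g • a) x‖ := by rw [h1, hdiff]
      _ ≤ ‖σ (a - g • a)‖ := ContinuousMap.norm_coe_le_norm _ x
      _ = ‖a - g • a‖ := StarAlgEquiv.norm_map σ _
      _ ≤ ε := hbound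
      _ ≤ 0 + ε := by linarith
  -- agreement lemma
  have key' : ∀ (σ : C(L, D) ≃⋆ₐ[ℂ] C(L, D)),
      (∀ (f : C(L, ℂ)) (a : C(L, D)), σ (f • a) = f • σ a) →
      ∀ (a b : C(L, D)) (x : L), a x = b x → σ a x = σ b x := by
    intro σ hσ a b x hab
    have h := key σ hσ (a - b) x (by simp [hab])
    rw [map_sub] at h
    exact sub_eq_zero.mp (by simpa using h)
  have hlin' : ∀ (f : C(L, ℂ)) (a : C(L, D)), τ.symm (f • a) = f • τ.symm a := by
    intro f a
    have h : τ (f • τ.symm a) = f • a := by rw [hlin, τ.apply_symm_apply]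
    rw [← h, τ.symm_apply_apply]
  constructor
  · intro x
    have hL : ∀ d : D, τ.symm (ContinuousMap.const L (τ (ContinuousMap.const L d) x)) x = d := by
      intro d
      have h1 := key' τ.symm hlin' (ContinuousMap.const L (τ (ContinuousMap.const L d) x))
        (τ (ContinuousMap.const L d)) x (by simp)
      simpa using h1
    have hR : ∀ d : D, τ (ContinuousMap.const L (τ.symm (ContinuousMap.const L d) x)) x = d := by
      intro d
      have h1 := key' τ hlin (ContinuousMap.const L (τ.symm (ContinuousMap.const L d) x))
        (τ.symm (ContinuousMap.const L d)) x (by simp)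
      simpa using h1
    have Tadd : ∀ d e : D, τ (ContinuousMap.const L (d + e)) x
        = τ (ContinuousMap.const L d) x + τ (ContinuousMap.const L e) x := fun d e => by
      rw [show ContinuousMap.const L (d + e)
        = ContinuousMap.const L d + ContinuousMap.const L e from rfl, map_add]; rfl
    have Tmul : ∀ d e : D, τ (ContinuousMap.const L (d * e)) x
        = τ (ContinuousMap.const L d) x * τ (ContinuousMap.const L e) x := fun d e => by
      rw [show ContinuousMap.const L (d * e)
        = ContinuousMap.const L d * ContinuousMap.const L e from rfl, map_mul]; rfl
    have Tsmul : ∀ (c : ℂ) (d : D), τ (ContinuousMap.const L (c • d)) x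
        = c • τ (ContinuousMap.const L d) x := fun c d => by
      rw [show ContinuousMap.const L (c • d)
        = c • ContinuousMap.const L d from rfl, map_smul]; rfl
    have Tstar : ∀ d : D, τ (ContinuousMap.const L (star d)) x
        = star (τ (ContinuousMap.const L d) x) := fun d => by
      rw [show ContinuousMap.const L (star d)
        = star (ContinuousMap.const L d) from rfl, map_star]; rfl
    exact ⟨{ toFun := fun d => τ (ContinuousMap.const L d) x,
             invFun := fun d => τ.symm (ContinuousMap.const L d) x,
             left_inv := hL, right_inv := hR,
             map_add' := Tadd, map_mul' := Tmul, map_smul' := Tsmul, map_star' := Tstar },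
           fun d => rfl,
           fun a => key' τ hlin a (ContinuousMap.const L (a x)) x (by simp)⟩
  · intro d
    exact (τ (ContinuousMap.const L d)).continuous
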